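/- Let F, G: (0,∞) → (0,∞) be continuous strictly decreasing functions such that x ↦ F(x)/G(x) is nonincreasing, and let ρ be a probability measure on (0,∞) such that F and G are ρ-integrable and ∫ F dρ = ∫ G dρ. Then there exists p > 0 with F(p) = G(p), and consequently, setting q := F(p), for every x > 0 either q ≤ G(x) ≤ F(x) or F(x) ≤ G(x) ≤ q. -/

import Mathlib

open MeasureTheory Set

lemma crossing_aux (F G : ℝ → ℝ) (ρ : Measure ℝ) [IsProbabilityMeasure ρ]
    (hρ : ρ (Ioi 0)ᶜ = 0) (hFint : Integrable F ρ) (hGint : Integrable G ρ)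
    (heq : (∫ x, F x ∂ρ) = ∫ x, G x ∂ρ)
    (h : ∀ x ∈ Ioi (0 : ℝ), G x < F x) : False := by
  have hae : ∀ᵐ x ∂ρ, x ∈ Ioi (0 : ℝ) := by
    rw [ae_iff]
    exact hρ
  have h1 : 0 ≤ᵐ[ρ] fun x => F x - G x :=
    hae.mono fun x hx => sub_nonneg.2 (h x hx).le
  have h2 : (∫ x, (F x - G x) ∂ρ) = 0 := by
    rw [integral_sub hFint hGint, heq, sub_self]
  have h3 := (integral_eq_zero_iff_of_nonneg_ae h1 (hFint.sub hGint)).1 h2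
  have h4 : ∀ᵐ x ∂ρ, False := by
    filter_upwards [hae, h3] with x hx hx0
    have := h x hx
    simp only [Pi.zero_apply] at hx0
    linarith
  have : ρ univ = 0 := by simpa using ae_iff.1 h4
  simp [measure_univ] at this

theorem crossing_point_of_inverse_marginal_utilities
    (F G : ℝ → ℝ)
    (hFcont : ContinuousOn F (Ioi 0)) (hGcont : ContinuousOn G (Ioi 0))
    (hFanti : StrictAntiOn F (Ioi 0)) (hGanti : StrictAntiOn G (Ioi 0))
    (hFpos : ∀ x ∈ Ioi (0 : ℝ), 0 < F x) (hGpos : ∀ x ∈ Ioi (0 : ℝ), 0 < G x)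
    (hratio : AntitoneOn (fun x => F x / G x) (Ioi 0))
    (ρ : Measure ℝ) [IsProbabilityMeasure ρ] (hρ : ρ (Ioi 0)ᶜ = 0)
    (hFint : Integrable F ρ) (hGint : Integrable G ρ)
    (heq : (∫ x, F x ∂ρ) = ∫ x, G x ∂ρ) :
    ∃ p > (0 : ℝ), F p = G p ∧
      ∀ x > (0 : ℝ), (F p ≤ G x ∧ G x ≤ F x) ∨ (F x ≤ G x ∧ G x ≤ F p) := by
  -- there exist points where F ≤ G and where G ≤ F
  have ha : ∃ a ∈ Ioi (0 : ℝ), F a ≤ G a := by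
    by_contra hcon
    push_neg at hcon
    exact crossing_aux F G ρ hρ hFint hGint heq hcon
  have hb : ∃ b ∈ Ioi (0 : ℝ), G b ≤ F b := by
    by_contra hcon
    push_neg at hcon
    exact crossing_aux G F ρ hρ hGint hFint heq.symm hcon
  obtain ⟨a, ha0, haF⟩ := ha
  obtain ⟨b, hb0, hbF⟩ := hb
  -- find the crossing point by IVT
  have hcont : ContinuousOn (fun x => F x - G x) (Ioi 0) := hFcont.sub hGcont
  have hp : ∃ p ∈ Ioi (0 : ℝ), F p = G p := by
    rcases le_total a b with hab | hab
    · have hsub : Icc a b ⊆ Ioi (0 : ℝ) := fun x hx => lt_of_lt_of_le ha0 hx.1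
      have := intermediate_value_Icc hab (hcont.mono hsub)
      have h0 : (0 : ℝ) ∈ Icc (F a - G a) (F b - G b) :=
        ⟨by linarith, by linarith⟩
      obtain ⟨p, hp1, hp2⟩ := this h0
      exact ⟨p, hsub hp1, by linarith [sub_eq_zero.1 hp2]⟩
    · have hsub : Icc b a ⊆ Ioi (0 : ℝ) := fun x hx => lt_of_lt_of_le hb0 hx.1
      have := intermediate_value_Icc' hab (hcont.mono hsub)
      have h0 : (0 : ℝ) ∈ Icc (F a - G a) (F b - G b) :=
        ⟨by linarith, by linarith⟩
      obtain ⟨p, hp1, hp2⟩ := this h0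
      exact ⟨p, hsub hp1, by linarith [sub_eq_zero.1 hp2]⟩
  obtain ⟨p, hp0, hpq⟩ := hp
  refine ⟨p, hp0, hpq, fun x hx0 => ?_⟩
  have hGxpos := hGpos x hx0
  have hGppos := hGpos p hp0
  have hrp : F p / G p = 1 := by rw [hpq, div_self hGppos.ne']
  rcases le_total x p with hxp | hpx
  · left
    have h1 : (1 : ℝ) ≤ F x / G x := by
      have := hratio hx0 hp0 hxp
      simpa only [hrp] using this
    constructor
    · rw [hpq]
      rcases eq_or_lt_of_le hxp with h | h
      · exact le_of_eq (by rw [h])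
      · exact (hGanti hx0 hp0 h).le
    · exact (one_le_div hGxpos).1 h1
  · right
    have h1 : F x / G x ≤ 1 := by
      have := hratio hp0 hx0 hpx
      simpa only [hrp] using this
    constructor
    · exact (div_le_one hGxpos).1 h1
    · rw [hpq]
      rcases eq_or_lt_of_le hpx with h | h
      · exact le_of_eq (by rw [h])
      · exact (hGanti hp0 hx0 h).le
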